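/- Let g ≥ 2 and n ≥ 2 be integers and let a_1,…,a_n be nonnegative integers with a_1+⋯+a_n = 2g−3+n; set P_{n,n+1} := 0. Then the following are equivalent: (i) for every t with 0 ≤ t ≤ n, P_{n,t} = (−1)^t·[ (C(n−1,t) − C(n−1,t−1))·(2g−3+n+t) + 2(t−1)·C(n−1,t−1) ]·A_n; (ii) for every t with 0 ≤ t ≤ n, (t+1)·P_{n,t+1} + (n−(t+1))·P_{n,t} = ((−1)^t·(2g−1)/(2g−3+n))·C(n,t)·P_{n,0}. -/

import Mathlib

open Finset

/-- Binomial coefficient with integer lower index: `0` if the lower index is negative. -/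
def zbinom (m : ℕ) (r : ℤ) : ℤ :=
  if 0 ≤ r then (m.choose r.toNat : ℤ) else 0

/-- Ordered `k`-tuples of pairwise disjoint nonempty subsets of `{1,…,n}` with union `{1,…,n}`. -/
def Parts (n k : ℕ) : Finset (Fin k → Finset (Fin n)) :=
  Finset.univ.filter fun I =>
    (∀ j, I j ≠ ∅) ∧ (∀ j j', j ≠ j' → Disjoint (I j) (I j')) ∧
      Finset.univ.biUnion I = Finset.univ

/-- The double factorial ratio `(2d-1)!! / (2d+1-2c)!! = ∏_{i=1}^{c-1} (2d+1-2i)`. -/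
def dfRatio (d c : ℕ) : ℤ := ∏ i ∈ Finset.range (c - 1), (2 * (d : ℤ) + 1 - 2 * (i + 1))

/-- The polynomial `P_{n,t}(a_1,…,a_n)` of the paper (with `g` implicit in the notation there). -/
def Pnt (g n t : ℕ) (a : Fin n → ℕ) : ℚ :=
  ∑ k ∈ Finset.Icc 1 n,
    ((-1) ^ k * (Nat.factorial (2 * g - 3 + k) : ℚ) / (Nat.factorial k : ℚ)) *
      ∑ I ∈ Parts n k,
        ∑ d ∈ Finset.Nat.antidiagonalTuple k (g - 2 + n),
          ∑ A ∈ Finset.powersetCard (n - t) (Finset.univ : Finset (Fin k)),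
            ∏ j, ((zbinom (2 * (∑ ℓ ∈ I j, a ℓ)) (2 * (d j : ℤ) - if j ∈ A then 1 else 0) : ℚ) *
              (dfRatio (d j) (I j).card : ℚ))

/-- `A_n(a_1,…,a_n)` of the paper. -/
def An (g n : ℕ) (a : Fin n → ℕ) : ℚ :=
  (-1) ^ n * (Nat.factorial (2 * g - 4 + n) : ℚ) *
    ∑ o ∈ (Finset.Nat.antidiagonalTuple n (2 * g - 4 + n)).filter (fun o => ∀ j, Odd (o j)),
      ∏ j, (Nat.choose (2 * a j) (o j) : ℚ)

lemma zbinom_natCast (m k : ℕ) : zbinom m (k : ℤ) = m.choose k := by simp [zbinom]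

lemma absorbQ (n k : ℕ) :
    ((k:ℚ)+1) * (n.choose (k+1) : ℚ) = ((n:ℚ) - k) * (n.choose k : ℚ) := by
  rcases lt_trichotomy k n with h | h | h
  · have h2 := Nat.choose_succ_right_eq n k
    have h3 : ((n.choose (k+1) * (k+1) : ℕ) : ℚ) = ((n.choose k * (n - k) : ℕ) : ℚ) := by
      exact_mod_cast congrArg (fun x : ℕ => (x : ℚ)) h2
    rw [Nat.cast_mul, Nat.cast_mul, Nat.cast_sub h.le] at h3
    push_cast at h3
    linarith
  · subst h
    simp [Nat.choose_succ_self]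
  · rw [Nat.choose_eq_zero_of_lt h, Nat.choose_eq_zero_of_lt (by omega)]
    simp

lemma keyalg (n' t : ℕ) (m : ℚ) :
    (((n':ℚ) + 1) - ((t:ℚ)+1)) * (((zbinom n' (t:ℤ) : ℚ) - (zbinom n' ((t:ℤ)-1) : ℚ)) * (m + t)
        + 2*((t:ℚ)-1) * (zbinom n' ((t:ℤ)-1) : ℚ))
    - ((t:ℚ)+1) * (((zbinom n' ((t:ℤ)+1) : ℚ) - (zbinom n' (t:ℤ) : ℚ)) * (m + t + 1)
        + 2*(t:ℚ) * (zbinom n' (t:ℤ) : ℚ))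
  = (m - ((n':ℚ)+1) + 2) * ((n'+1).choose t : ℚ) := by
  have h1 : ((t:ℚ)+1) * (zbinom n' ((t:ℤ)+1) : ℚ) = ((n':ℚ) - t) * (zbinom n' (t:ℤ) : ℚ) := by
    have e : ((t:ℤ)+1) = ((t+1 : ℕ) : ℤ) := by push_cast; ring
    rw [e, zbinom_natCast, zbinom_natCast]
    push_cast
    exact absorbQ n' t
  have h2 : (t:ℚ) * (zbinom n' (t:ℤ) : ℚ) = (((n':ℚ)+1) - t) * (zbinom n' ((t:ℤ)-1) : ℚ) := by
    cases t with
    | zero => norm_num [zbinom]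
    | succ s =>
      have e : ((s+1:ℕ):ℤ) - 1 = ((s:ℕ):ℤ) := by push_cast; ring
      rw [e, zbinom_natCast, zbinom_natCast]
      push_cast
      linear_combination absorbQ n' s
  have h3 : (zbinom n' (t:ℤ) : ℚ) + (zbinom n' ((t:ℤ)-1) : ℚ) = ((n'+1).choose t : ℚ) := by
    cases t with
    | zero => norm_num [zbinom]
    | succ s =>
      have e : ((s+1:ℕ):ℤ) - 1 = ((s:ℕ):ℤ) := by push_cast; ring
      rw [e, zbinom_natCast, zbinom_natCast]
      have h := Nat.choose_succ_succ' n' s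
      exact_mod_cast (by omega : n'.choose (s+1) + n'.choose s = (n'+1).choose (s+1))
  linear_combination (-(m+(t:ℚ)+1)) * h1 + (m+1-(t:ℚ)) * h2 + (m-((n':ℚ)+1)+2) * h3

def Fc (g n : ℕ) (A : ℚ) (t : ℕ) : ℚ :=
  (-1 : ℚ) ^ t * (((zbinom (n - 1) (t : ℤ) : ℚ) - (zbinom (n - 1) ((t : ℤ) - 1) : ℚ))
        * (2 * (g : ℚ) - 3 + n + t)
      + 2 * ((t : ℚ) - 1) * (zbinom (n - 1) ((t : ℤ) - 1) : ℚ)) * A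

lemma Fc_zero (g n : ℕ) (A : ℚ) : Fc g n A 0 = (2*(g:ℚ)-3+(n:ℚ)) * A := by
  norm_num [Fc, zbinom]

lemma Fc_top (g n : ℕ) (hn : 1 ≤ n) (A : ℚ) : Fc g n A (n+1) = 0 := by
  have h1 : zbinom (n-1) ((n+1 : ℕ) : ℤ) = 0 := by
    rw [zbinom_natCast, Nat.choose_eq_zero_of_lt (by omega)]; rfl
  have h2 : zbinom (n-1) (((n+1:ℕ) : ℤ) - 1) = 0 := by
    have e : ((n+1:ℕ):ℤ) - 1 = ((n:ℕ):ℤ) := by push_cast; ring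
    rw [e, zbinom_natCast, Nat.choose_eq_zero_of_lt (by omega)]; rfl
  simp only [Fc, h1, h2]
  push_cast
  ring

lemma Frec (g n : ℕ) (hg : 2 ≤ g) (hn : 2 ≤ n) (A : ℚ) (t : ℕ) :
    ((t:ℚ)+1) * Fc g n A (t+1) + ((n : ℚ) - ((t : ℚ) + 1)) * Fc g n A t
      = (-1:ℚ)^t * (2*(g:ℚ)-1) * (n.choose t : ℚ) * A := by
  obtain ⟨n', rfl⟩ : ∃ n', n = n'+1 := ⟨n-1, by omega⟩
  have key := keyalg n' t (2*(g:ℚ)-3+((n':ℚ)+1))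
  simp only [Fc, Nat.add_sub_cancel]
  have e1 : (((t+1:ℕ)):ℤ) = (t:ℤ)+1 := by push_cast; ring
  rw [e1, show (t:ℤ)+1-1 = (t:ℤ) from by ring]
  push_cast
  linear_combination ((-1:ℚ)^t * A) * key

lemma parts_sum_perm (n : ℕ) (G : (Fin n → Finset (Fin n)) → ℚ) :
    ∑ I ∈ Parts n n, G I = ∑ σ : Equiv.Perm (Fin n), G (fun j => ({σ j} : Finset (Fin n))) := by
  refine (Finset.sum_bij
    (fun (σ : Equiv.Perm (Fin n)) (_ : σ ∈ (Finset.univ : Finset (Equiv.Perm (Fin n)))) =>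
      (fun j => ({σ j} : Finset (Fin n)))) ?_ ?_ ?_ ?_).symm
  · intro σ _
    simp only [Parts, Finset.mem_filter, Finset.mem_univ, true_and]
    refine ⟨fun j => Finset.singleton_ne_empty _, fun j j' hjj' => ?_, ?_⟩
    · exact Finset.disjoint_singleton.mpr fun h => hjj' (σ.injective h)
    · ext x
      simp only [Finset.mem_biUnion, Finset.mem_univ, true_and, Finset.mem_singleton, iff_true]
      exact ⟨σ.symm x, by simp⟩
  · intro σ _ τ _ h
    exact Equiv.ext fun j => Finset.singleton_inj.mp (congrFun h j)
  · intro I hI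
    simp only [Parts, Finset.mem_filter, Finset.mem_univ, true_and] at hI
    obtain ⟨hne, hdisj, hcov⟩ := hI
    have hcards : ∑ j, (I j).card = n := by
      rw [← Finset.card_biUnion (fun x _ y _ hxy => hdisj x y hxy), hcov]
      simp
    have h1 : ∀ j : Fin n, 1 ≤ (I j).card := fun j =>
      Finset.card_pos.mpr (Finset.nonempty_iff_ne_empty.mpr (hne j))
    have hone : ∀ j : Fin n, (I j).card = 1 := by
      by_contra hcon
      push_neg at hcon
      obtain ⟨j0, hj0⟩ := hcon
      have hlt : ∑ _j : Fin n, 1 < ∑ j, (I j).card :=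
        Finset.sum_lt_sum (fun i _ => h1 i) ⟨j0, Finset.mem_univ _, by have := h1 j0; omega⟩
      simp [hcards] at hlt
    choose y hy using fun j => Finset.card_eq_one.mp (hone j)
    have hinj : Function.Injective y := by
      intro j j' hjj'
      by_contra hne'
      have hd := hdisj j j' hne'
      rw [hy j, hy j', hjj'] at hd
      simp at hd
    have hbij : Function.Bijective y := Finite.injective_iff_bijective.mp hinj
    exact ⟨Equiv.ofBijective y hbij, Finset.mem_univ _, funext fun j => (hy j).symm⟩
  · intro σ _
    rfl

lemma perm_reindex (n N : ℕ) (a : Fin n → ℕ) (σ : Equiv.Perm (Fin n)) :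
    ∑ d ∈ Finset.Nat.antidiagonalTuple n N,
        ∏ j, (zbinom (2 * a (σ j)) (2 * (d j : ℤ) - 1) : ℚ)
      = ∑ d ∈ Finset.Nat.antidiagonalTuple n N,
        ∏ j, (zbinom (2 * a j) (2 * (d j : ℤ) - 1) : ℚ) := by
  refine Finset.sum_nbij' (fun d => d ∘ σ.symm) (fun d => d ∘ σ) ?_ ?_ ?_ ?_ ?_
  · intro d hd
    rw [Finset.Nat.mem_antidiagonalTuple] at hd ⊢
    rw [← hd]
    exact Equiv.sum_comp σ.symm d
  · intro d hd
    rw [Finset.Nat.mem_antidiagonalTuple] at hd ⊢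
    rw [← hd]
    exact Equiv.sum_comp σ d
  · intro d _; funext j; simp
  · intro d _; funext j; simp
  · intro d _
    exact Fintype.prod_equiv σ _ _ (fun j => by simp)

lemma S_eq_T (g n : ℕ) (hg : 2 ≤ g) (a : Fin n → ℕ) :
    ∑ d ∈ Finset.Nat.antidiagonalTuple n (g - 2 + n),
        ∏ j, (zbinom (2 * a j) (2 * (d j : ℤ) - 1) : ℚ)
      = ∑ o ∈ (Finset.Nat.antidiagonalTuple n (2 * g - 4 + n)).filter (fun o => ∀ j, Odd (o j)),
        ∏ j, (Nat.choose (2 * a j) (o j) : ℚ) := by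
  rw [← Finset.sum_filter_of_ne (p := fun d : Fin n → ℕ => ∀ j, 1 ≤ d j) ?hp]
  case hp =>
    intro d _ hne j
    by_contra h0
    apply hne
    have hdj : d j = 0 := by omega
    apply Finset.prod_eq_zero (Finset.mem_univ j)
    norm_num [zbinom, hdj]
  refine Finset.sum_nbij' (fun d j => 2 * d j - 1) (fun o j => o j / 2 + 1) ?_ ?_ ?_ ?_ ?_
  · intro d hd
    simp only [Finset.mem_filter, Finset.Nat.mem_antidiagonalTuple] at hd ⊢
    obtain ⟨hsum, hpos⟩ := hd
    constructor
    · have h2 : ∑ j, (2 * d j - 1 + 1) = ∑ j, 2 * d j :=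
        Finset.sum_congr rfl (fun j _ => by have := hpos j; omega)
      rw [Finset.sum_add_distrib, ← Finset.mul_sum, hsum] at h2
      simp only [Finset.sum_const, Finset.card_univ, Fintype.card_fin, smul_eq_mul,
        mul_one] at h2
      omega
    · intro j
      rw [Nat.odd_iff]
      have := hpos j
      omega
  · intro o ho
    simp only [Finset.mem_filter, Finset.Nat.mem_antidiagonalTuple] at ho ⊢
    obtain ⟨hsum, hodd⟩ := ho
    constructor
    · have h2 : ∑ j, 2 * (o j / 2 + 1) = ∑ j, (o j + 1) :=
        Finset.sum_congr rfl (fun j _ => by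
          have := Nat.odd_iff.mp (hodd j); omega)
      rw [← Finset.mul_sum] at h2
      have h4 : ∑ j, (o j + 1) = (2*g-4+n) + n := by
        rw [Finset.sum_add_distrib, hsum]
        simp
      omega
    · intro j; omega
  · intro d hd
    simp only [Finset.mem_filter] at hd
    funext j
    beta_reduce
    have := hd.2 j
    omega
  · intro o ho
    simp only [Finset.mem_filter] at ho
    funext j
    beta_reduce
    have := Nat.odd_iff.mp (ho.2 j)
    omega
  · intro d hd
    simp only [Finset.mem_filter] at hd
    refine Finset.prod_congr rfl (fun j _ => ?_)
    have h1 : 1 ≤ d j := hd.2 j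
    have h2 : (2 * ((d j : ℕ) : ℤ) - 1) = ((2 * d j - 1 : ℕ) : ℤ) := by omega
    rw [h2, zbinom_natCast]
    push_cast
    rfl

lemma PntZero (g n : ℕ) (hg : 2 ≤ g) (hn : 2 ≤ n) (a : Fin n → ℕ) :
    Pnt g n 0 a = (2*(g:ℚ)-3+(n:ℚ)) * An g n a := by
  rw [Pnt]
  rw [Finset.sum_eq_single_of_mem n (by simp [Finset.mem_Icc]; omega) ?side]
  case side =>
    intro k hk hkn
    have hklt : k < n := by
      simp only [Finset.mem_Icc] at hk
      omega
    have hemp : Finset.powersetCard (n - 0) (Finset.univ : Finset (Fin k)) = ∅ := by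
      rw [Finset.powersetCard_eq_empty]
      simpa using hklt
    rw [hemp]
    simp
  -- the k = n term
  have hsingle : Finset.powersetCard (n - 0) (Finset.univ : Finset (Fin n)) = {Finset.univ} := by
    have hc : n - 0 = (Finset.univ : Finset (Fin n)).card := by simp
    rw [hc, Finset.powersetCard_self]
  rw [hsingle]
  simp only [Finset.sum_singleton, Finset.mem_univ, if_true]
  rw [parts_sum_perm n (fun I =>
    ∑ d ∈ Finset.Nat.antidiagonalTuple n (g - 2 + n),
      ∏ j, ((zbinom (2 * (∑ ℓ ∈ I j, a ℓ)) (2 * (d j : ℤ) - 1) : ℚ) *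
        (dfRatio (d j) (I j).card : ℚ)))]
  have hterm : ∀ σ : Equiv.Perm (Fin n),
      (∑ d ∈ Finset.Nat.antidiagonalTuple n (g - 2 + n),
        ∏ j, ((zbinom (2 * (∑ ℓ ∈ ({σ j} : Finset (Fin n)), a ℓ)) (2 * (d j : ℤ) - 1) : ℚ) *
          (dfRatio (d j) ({σ j} : Finset (Fin n)).card : ℚ)))
      = ∑ d ∈ Finset.Nat.antidiagonalTuple n (g - 2 + n),
          ∏ j, (zbinom (2 * a j) (2 * (d j : ℤ) - 1) : ℚ) := by
    intro σ
    rw [← perm_reindex n (g - 2 + n) a σ]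
    refine Finset.sum_congr rfl (fun d _ => Finset.prod_congr rfl (fun j _ => ?_))
    simp [dfRatio]
  rw [Finset.sum_congr rfl (fun σ _ => hterm σ)]
  rw [Finset.sum_const, Finset.card_univ, Fintype.card_perm, Fintype.card_fin]
  rw [S_eq_T g n hg a]
  rw [An]
  have hfac : ((2*g-3+n).factorial : ℚ)
      = (((2*g-4+n : ℕ) : ℚ) + 1) * ((2*g-4+n).factorial : ℚ) := by
    have he : 2*g-3+n = (2*g-4+n) + 1 := by omega
    rw [he, Nat.factorial_succ]
    push_cast
    ring
  have hm : ((2*g-4+n : ℕ) : ℚ) + 1 = 2*(g:ℚ)-3+(n:ℚ) := by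
    rw [Nat.cast_add, Nat.cast_sub (by omega : 4 ≤ 2*g)]
    push_cast
    ring
  have hnfac : (n.factorial : ℚ) ≠ 0 := Nat.cast_ne_zero.mpr n.factorial_ne_zero
  rw [hfac, hm, nsmul_eq_mul]
  field_simp

theorem statement10 (g n : ℕ) (hg : 2 ≤ g) (hn : 2 ≤ n) (a : Fin n → ℕ)
    (ha : ∑ j, a j = 2 * g - 3 + n) :
    (∀ t ≤ n, Pnt g n t a
        = (-1 : ℚ) ^ t * (((zbinom (n - 1) (t : ℤ) : ℚ) - (zbinom (n - 1) ((t : ℤ) - 1) : ℚ))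
              * (2 * (g : ℚ) - 3 + n + t)
            + 2 * ((t : ℚ) - 1) * (zbinom (n - 1) ((t : ℤ) - 1) : ℚ)) * An g n a)
    ↔ (∀ t ≤ n,
        ((t : ℚ) + 1) * (if t + 1 ≤ n then Pnt g n (t + 1) a else 0)
            + ((n : ℚ) - ((t : ℚ) + 1)) * Pnt g n t a
          = (-1 : ℚ) ^ t * (2 * (g : ℚ) - 1) / (2 * (g : ℚ) - 3 + n)
              * (Nat.choose n t : ℚ) * Pnt g n 0 a) := by
  have hg1 : (2:ℚ) ≤ (g:ℚ) := by exact_mod_cast hg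
  have hn1 : (2:ℚ) ≤ (n:ℚ) := by exact_mod_cast hn
  have hm0 : (2*(g:ℚ)-3+(n:ℚ)) ≠ 0 := by
    have : (0:ℚ) < 2*(g:ℚ)-3+(n:ℚ) := by linarith
    exact ne_of_gt this
  set A := An g n a with hA
  have hP0 : Pnt g n 0 a = (2*(g:ℚ)-3+(n:ℚ)) * A := PntZero g n hg hn a
  constructor
  · intro h t ht
    have hFt : Pnt g n t a = Fc g n A t := h t ht
    by_cases hc : t + 1 ≤ n
    · have hFt1 : Pnt g n (t+1) a = Fc g n A (t+1) := h (t+1) hc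
      rw [if_pos hc, hFt, hFt1, hP0, Frec g n hg hn A t]
      field_simp
    · have htn : t = n := by omega
      subst htn
      rw [if_neg hc, hFt, hP0]
      have hr := Frec g t hg hn A t
      rw [Fc_top g t (by omega) A] at hr
      have h2 : (-1:ℚ)^t * (2*(g:ℚ)-1) / (2*(g:ℚ)-3+(t:ℚ)) * (t.choose t : ℚ)
            * ((2*(g:ℚ)-3+(t:ℚ)) * A)
          = (-1:ℚ)^t * (2*(g:ℚ)-1) * (t.choose t : ℚ) * A := by
        field_simp
      rw [h2]
      linear_combination hr
  · intro h
    have main : ∀ t, t ≤ n → Pnt g n t a = Fc g n A t := by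
      intro t
      induction t with
      | zero => intro _; rw [hP0, Fc_zero]
      | succ t ih =>
        intro ht
        have ht' : t ≤ n := by omega
        have hPt := ih ht'
        have h2 := h t ht'
        rw [if_pos ht, hPt, hP0] at h2
        have hr := Frec g n hg hn A t
        have hne : ((t:ℚ)+1) ≠ 0 := by positivity
        have hcc : (-1:ℚ)^t * (2*(g:ℚ)-1) / (2*(g:ℚ)-3+(n:ℚ)) * (n.choose t : ℚ)
              * ((2*(g:ℚ)-3+(n:ℚ)) * A)
            = (-1:ℚ)^t * (2*(g:ℚ)-1) * (n.choose t : ℚ) * A := by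
          field_simp
        rw [hcc] at h2
        have hmul : ((t:ℚ)+1) * Pnt g n (t+1) a = ((t:ℚ)+1) * Fc g n A (t+1) := by
          linear_combination h2 - hr
        exact mul_left_cancel₀ hne hmul
    intro t ht
    exact main t ht
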